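/- Let A be an m×m Hermitian matrix and ω(A) the 2m×2m skew-symmetric matrix whose (r,s)-block is [[0, a_{rs}],[-conj(a_{rs}), 0]]. Then -J_m ω(A) is Hermitian; and if A is moreover non-negative definite, then -J_m ω(A) is non-negative definite. -/

import Mathlib

open Matrix
open scoped Classical ComplexOrder

/-- The `2m × 2m` block-diagonal matrix `J_m` with diagonal blocks `[[0,1],[-1,0]]`. -/
def Jmat (m : ℕ) : Matrix (Fin (2 * m)) (Fin (2 * m)) ℂ :=
  fun i j => if i.val % 2 = 0 ∧ j.val = i.val + 1 then 1
    else if j.val % 2 = 0 ∧ i.val = j.val + 1 then -1 else 0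

/-- The skew-symmetric matrix `ω(A)` whose `(r,s)` block is
`[[0, a_{rs}], [-conj(a_{rs}), 0]]`. -/
def omegaH {m : ℕ} (A : Matrix (Fin m) (Fin m) ℂ) :
    Matrix (Fin (2 * m)) (Fin (2 * m)) ℂ := fun i j =>
  have hi : i.val / 2 < m := by have := i.isLt; omega
  have hj : j.val / 2 < m := by have := j.isLt; omega
  if i.val % 2 = 0 ∧ j.val % 2 = 1 then A ⟨i.val / 2, hi⟩ ⟨j.val / 2, hj⟩
  else if i.val % 2 = 1 ∧ j.val % 2 = 0 then
    -(starRingEnd ℂ) (A ⟨i.val / 2, hi⟩ ⟨j.val / 2, hj⟩)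
  else 0

private lemma fin_div_lt {m : ℕ} (i : Fin (2 * m)) : i.val / 2 < m := by
  have := i.isLt; omega

/-- Parity-interleaving embedding `Fin (2m) → Fin m ⊕ Fin m`. -/
def embPar (m : ℕ) (i : Fin (2 * m)) : Fin m ⊕ Fin m :=
  if i.val % 2 = 0 then Sum.inl ⟨i.val / 2, fin_div_lt i⟩
  else Sum.inr ⟨i.val / 2, fin_div_lt i⟩

lemma negJ_omega_eq (m : ℕ) (A : Matrix (Fin m) (Fin m) ℂ) (hA : A.IsHermitian) :
    (-(Jmat m)) * omegaH A = (fromBlocks Aᵀ 0 0 A).submatrix (embPar m) (embPar m) := by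
  have hAc : ∀ a b, (starRingEnd ℂ) (A a b) = A b a := by
    intro a b
    have := congrFun (congrFun hA b) a
    simpa [Matrix.conjTranspose_apply] using this
  ext i j
  rw [Matrix.mul_apply]
  by_cases hi : i.val % 2 = 0
  · have hlt : i.val + 1 < 2 * m := by have := i.isLt; omega
    rw [Finset.sum_eq_single_of_mem (⟨i.val + 1, hlt⟩ : Fin (2 * m)) (Finset.mem_univ _)
      (fun b _ hb => ?_)]
    · have h1 : ((-(Jmat m)) i ⟨i.val + 1, hlt⟩) = -1 := by
        simp [Jmat, hi]
      rw [h1]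
      by_cases hj : j.val % 2 = 0
      · have hω : omegaH A ⟨i.val + 1, hlt⟩ j =
            -(starRingEnd ℂ) (A ⟨i.val / 2, fin_div_lt i⟩ ⟨j.val / 2, fin_div_lt j⟩) := by
          have h2 : (i.val + 1) % 2 = 1 := by omega
          have h3 : (i.val + 1) / 2 = i.val / 2 := by omega
          simp [omegaH, h2, hj, h3]
        rw [hω]
        simp [submatrix_apply, embPar, hi, hj, fromBlocks, hAc, Matrix.transpose_apply]
      · have hj1 : j.val % 2 = 1 := by omega
        have hω : omegaH A ⟨i.val + 1, hlt⟩ j = 0 := by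
          have h2 : (i.val + 1) % 2 = 1 := by omega
          simp [omegaH, h2, hj1]
        rw [hω]
        simp [submatrix_apply, embPar, hi, hj1, fromBlocks]
    · have hb' : b.val ≠ i.val + 1 := fun h => hb (Fin.ext h)
      have hz : (Jmat m) i b = 0 := by
        simp only [Jmat]
        rw [if_neg (fun h => hb' h.2), if_neg (fun h => by omega)]
      simp [hz]
  · have hi1 : i.val % 2 = 1 := by omega
    have hlt : i.val - 1 < 2 * m := by have := i.isLt; omega
    rw [Finset.sum_eq_single_of_mem (⟨i.val - 1, hlt⟩ : Fin (2 * m)) (Finset.mem_univ _)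
      (fun b _ hb => ?_)]
    · have h1 : ((-(Jmat m)) i ⟨i.val - 1, hlt⟩) = 1 := by
        have h2 : (i.val - 1) % 2 = 0 := by omega
        have h3 : i.val = (i.val - 1) + 1 := by omega
        simp [Jmat, hi1, h2, ← h3]
      rw [h1]
      by_cases hj : j.val % 2 = 0
      · have hω : omegaH A ⟨i.val - 1, hlt⟩ j = 0 := by
          have h2 : (i.val - 1) % 2 = 0 := by omega
          simp [omegaH, h2, hj]
        rw [hω]
        simp [submatrix_apply, embPar, hi1, hj, fromBlocks]
      · have hj1 : j.val % 2 = 1 := by omega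
        have hω : omegaH A ⟨i.val - 1, hlt⟩ j =
            A ⟨i.val / 2, fin_div_lt i⟩ ⟨j.val / 2, fin_div_lt j⟩ := by
          have h2 : (i.val - 1) % 2 = 0 := by omega
          have h3 : (i.val - 1) / 2 = i.val / 2 := by omega
          simp [omegaH, h2, hj1, h3]
        rw [hω]
        simp [submatrix_apply, embPar, hi1, hj1, fromBlocks]
    · have hb' : ¬ (i.val = b.val + 1) := by
        intro h
        exact hb (Fin.ext (show b.val = i.val - 1 by omega))
      have hz : (Jmat m) i b = 0 := by
        simp only [Jmat]
        rw [if_neg (fun h => by omega), if_neg (fun h => hb' h.2)]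
      simp [hz]

lemma fromBlocks_isHermitian {m : ℕ} {A : Matrix (Fin m) (Fin m) ℂ} (hA : A.IsHermitian) :
    (fromBlocks Aᵀ 0 0 A).IsHermitian := by
  have h1 : (Aᵀ).IsHermitian := hA.transpose
  unfold Matrix.IsHermitian
  rw [fromBlocks_conjTranspose]
  simp [h1.eq, hA.eq]

lemma fromBlocks_posSemidef {m : ℕ} {A : Matrix (Fin m) (Fin m) ℂ} (hA : A.PosSemidef) :
    (fromBlocks Aᵀ 0 0 A).PosSemidef := by
  refine .of_dotProduct_mulVec_nonneg (fromBlocks_isHermitian hA.1) fun x => ?_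
  have hx : x = Sum.elim (x ∘ Sum.inl) (x ∘ Sum.inr) := by
    funext i; cases i <;> rfl
  rw [hx]
  rw [Function.star_sumElim, fromBlocks_mulVec, sumElim_dotProduct_sumElim]
  simp only [Matrix.zero_mulVec, add_zero, zero_add]
  exact add_nonneg (hA.transpose.dotProduct_mulVec_nonneg _) (hA.dotProduct_mulVec_nonneg _)

theorem negJ_omega_hermitian_and_posSemidef (m : ℕ) (A : Matrix (Fin m) (Fin m) ℂ)
    (hA : A.IsHermitian) :
    ((-(Jmat m)) * omegaH A).IsHermitian ∧
      (A.PosSemidef → ((-(Jmat m)) * omegaH A).PosSemidef) := by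
  rw [negJ_omega_eq m A hA]
  exact ⟨(fromBlocks_isHermitian hA).submatrix _,
    fun hpsd => (fromBlocks_posSemidef hpsd).submatrix _⟩
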